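/- Let α, β, θ > 0, λ ∈ [−1,1], and r ∈ ℕ. Then the r-th moment of the generalized transmuted Weibull distribution satisfies ∫₀^∞ x^r · θαβ x^{α−1} e^{−βx^α}(1 − e^{−βx^α})^{θ−1}[1 + λ − 2λ(1 − e^{−βx^α})^θ] dx = Σ_{i=0}^∞ (−1)^i [(1+λ)·C(θ−1,i) − 2λ·C(2θ−1,i)] · θ · Γ(r/α + 1) / (β^{r/α} (i+1)^{r/α + 1}), where Γ is the Gamma function. -/

import Mathlib

open Real MeasureTheory

/-- Generalized binomial coefficient `C(a,k) = a(a−1)⋯(a−k+1)/k!`. -/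
noncomputable def genChoose (a : ℝ) (k : ℕ) : ℝ :=
  (∏ i ∈ Finset.range k, (a - i)) / (Nat.factorial k)

lemma genChoose_zero (a : ℝ) : genChoose a 0 = 1 := by simp [genChoose]

lemma genChoose_succ (a : ℝ) (n : ℕ) :
    genChoose a (n + 1) * ((n : ℝ) + 1) = genChoose a n * (a - n) := by
  have h1 : (Nat.factorial n : ℝ) ≠ 0 := Nat.cast_ne_zero.2 (Nat.factorial_ne_zero n)
  have h2 : ((n : ℝ) + 1) ≠ 0 := by positivity
  unfold genChoose
  rw [Finset.prod_range_succ, Nat.factorial_succ]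
  push_cast
  field_simp

lemma abs_genChoose_succ (a : ℝ) (n : ℕ) (h : a ≤ n) :
    |genChoose a (n + 1)| * ((n : ℝ) + 1) = |genChoose a n| * ((n : ℝ) - a) := by
  have h2 := congrArg abs (genChoose_succ a n)
  rw [abs_mul, abs_mul, abs_of_pos (by positivity : (0:ℝ) < (n:ℝ)+1),
    abs_of_nonpos (by linarith : a - (n:ℝ) ≤ 0)] at h2
  linarith [h2]

lemma genChoose_weight_decr (a : ℝ) {c : ℝ} (hc0 : 0 ≤ c) (hc1 : c ≤ 1) (hca : c ≤ a + 1)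
    {n : ℕ} (h : a ≤ n) :
    |genChoose a (n + 1)| * ((n : ℝ) + 1 + 1) ^ c ≤ |genChoose a n| * ((n : ℝ) + 1) ^ c := by
  set x : ℝ := (n : ℝ) with hxdef
  have hx0 : (0:ℝ) ≤ x := Nat.cast_nonneg n
  have hP : (0:ℝ) < x + 1 := by linarith
  set t : ℝ := 1 / (x + 1) with htdef
  have ht0 : 0 < t := by positivity
  have ht1 : t ≤ 1 := by rw [htdef, div_le_one hP]; linarith
  have hrec : |genChoose a (n+1)| = |genChoose a n| * ((x - a) / (x + 1)) := by
    have := abs_genChoose_succ a n h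
    field_simp at this ⊢
    linarith [this]
  have hB : (1 + t) ^ c ≤ 1 + c * t :=
    rpow_one_add_le_one_add_mul_self (by linarith) hc0 hc1
  have hsplit : x + 1 + 1 = (x + 1) * (1 + t) := by
    rw [htdef]; field_simp
  rw [hrec, hsplit, Real.mul_rpow (le_of_lt hP) (by positivity)]
  have hkey : (x - a) / (x + 1) * (1 + t) ^ c ≤ 1 := by
    have h1 : (x - a) / (x + 1) ≤ 1 - c * t := by
      rw [div_le_iff₀ hP]
      have : t * (x + 1) = 1 := by rw [htdef]; field_simp
      nlinarith [this]
    have h2 : (0:ℝ) ≤ (x - a) / (x + 1) := by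
      apply div_nonneg (by linarith) (le_of_lt hP)
    calc (x - a) / (x + 1) * (1 + t) ^ c ≤ (1 - c * t) * (1 + c * t) := by
          apply mul_le_mul h1 hB (by positivity) (by nlinarith)
      _ = 1 - (c*t)^2 := by ring
      _ ≤ 1 := by nlinarith
  calc |genChoose a n| * ((x - a) / (x + 1)) * ((x + 1) ^ c * (1 + t) ^ c)
      = (|genChoose a n| * (x+1)^c) * ((x - a) / (x + 1) * (1 + t) ^ c) := by ring
    _ ≤ (|genChoose a n| * (x+1)^c) * 1 := by
        apply mul_le_mul_of_nonneg_left hkey (by positivity)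
    _ = |genChoose a n| * (x + 1) ^ c := by ring

lemma summable_rpow_base {p : ℝ} (hp : 1 < p) :
    Summable (fun n : ℕ => ((n : ℝ) + 1) ^ (-p)) := by
  have h : Summable (fun n : ℕ => ((n : ℝ) ^ p)⁻¹) := Real.summable_nat_rpow_inv.2 hp
  have h2 := (summable_nat_add_iff (f := fun n : ℕ => ((n : ℝ) ^ p)⁻¹) 1).2 h
  refine h2.congr fun n => ?_
  rw [Real.rpow_neg (by positivity)]
  push_cast
  ring_nf

lemma summable_abs_genChoose_div (a : ℝ) (ha : -1 < a) :
    Summable (fun n : ℕ => |genChoose a n| / ((n : ℝ) + 1)) := by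
  set c : ℝ := min (a + 1) 1 with hcdef
  have hc0 : 0 < c := lt_min (by linarith) one_pos
  have hc1 : c ≤ 1 := min_le_right _ _
  have hca : c ≤ a + 1 := min_le_left _ _
  set N : ℕ := ⌈a⌉₊ with hNdef
  have haN : a ≤ (N : ℝ) := Nat.le_ceil a
  set e : ℕ → ℝ := fun n => |genChoose a n| * ((n : ℝ) + 1) ^ c with hedef
  have hdecr : ∀ n, N ≤ n → e (n + 1) ≤ e n := by
    intro n hn
    have han : a ≤ (n : ℝ) := le_trans haN (Nat.cast_le.2 hn)
    have := genChoose_weight_decr a (le_of_lt hc0) hc1 hca han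
    simpa [hedef, Nat.cast_succ] using this
  have hbound : ∀ n, N ≤ n → e n ≤ e N := by
    intro n hn
    induction n, hn using Nat.le_induction with
    | base => exact le_refl _
    | succ n hn ih => exact le_trans (hdecr n hn) ih
  rw [← summable_nat_add_iff N]
  have hbase : Summable (fun n : ℕ => ((n : ℝ) + 1) ^ (-(c + 1))) :=
    summable_rpow_base (by linarith)
  have hshift := (summable_nat_add_iff (f := fun n : ℕ => ((n : ℝ) + 1) ^ (-(c + 1))) N).2 hbase
  refine Summable.of_nonneg_of_le (fun n => by positivity) (fun n => ?_)
    (hshift.mul_left (e N))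
  have hm : (0:ℝ) < ((n + N : ℕ) : ℝ) + 1 := by positivity
  have h1 : |genChoose a (n + N)| ≤ e N * (((n + N : ℕ) : ℝ) + 1) ^ (-c) := by
    have h2 : e (n + N) ≤ e N := hbound _ (Nat.le_add_left N n)
    have h3 : |genChoose a (n + N)| = e (n + N) * (((n + N : ℕ) : ℝ) + 1) ^ (-c) := by
      rw [hedef]
      rw [mul_assoc, ← Real.rpow_add hm, add_neg_cancel, Real.rpow_zero, mul_one]
    rw [h3]
    exact mul_le_mul_of_nonneg_right h2 (by positivity)
  calc |genChoose a (n + N)| / (((n + N : ℕ) : ℝ) + 1)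
      ≤ e N * (((n + N : ℕ) : ℝ) + 1) ^ (-c) / (((n + N : ℕ) : ℝ) + 1) := by
        apply div_le_div_of_nonneg_right h1 hm.le
    _ = e N * (((n + N : ℕ) : ℝ) + 1) ^ (-(c + 1)) := by
        rw [mul_div_assoc, div_eq_mul_inv, ← Real.rpow_neg_one (((n + N : ℕ) : ℝ) + 1), ← Real.rpow_add hm]
        ring_nf

lemma summable_genChoose_deriv_bound (a : ℝ) {ρ : ℝ} (hρ0 : 0 < ρ) (hρ1 : ρ < 1) :
    Summable (fun n : ℕ => |genChoose a n| * n * ρ ^ (n - 1)) := by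
  set r : ℝ := (1 + ρ) / 2 with hrdef
  have hρr : ρ < r := by rw [hrdef]; linarith
  have hr1 : r < 1 := by rw [hrdef]; linarith
  apply summable_of_ratio_norm_eventually_le hr1
  rw [Filter.eventually_atTop]
  obtain ⟨M, hM⟩ := exists_nat_ge ((|a| + 1) * ρ / (r - ρ) + |a| + 1)
  refine ⟨M + 1, fun n hn => ?_⟩
  have hn1 : 1 ≤ n := le_trans (Nat.le_add_left 1 M) hn
  have hnM : ((|a| + 1) * ρ / (r - ρ) + |a| + 1 : ℝ) ≤ n := by
    calc ((|a| + 1) * ρ / (r - ρ) + |a| + 1 : ℝ) ≤ M := hM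
      _ ≤ n := by exact_mod_cast le_trans (Nat.le_succ M) hn
  have ha_le : a ≤ (n : ℝ) := by
    have : |a| ≤ (n : ℝ) := by
      have h1 : (0:ℝ) ≤ (|a| + 1) * ρ / (r - ρ) := by
        apply div_nonneg (by positivity) (by linarith)
      linarith
    linarith [le_abs_self a]
  have hrec := abs_genChoose_succ a n ha_le
  have hpow : ρ ^ (n + 1 - 1) = ρ ^ (n - 1) * ρ := by
    rw [Nat.add_sub_cancel, ← pow_succ]
    congr 1
    omega
  have hnn : ∀ m : ℕ, (0:ℝ) ≤ |genChoose a m| * m * ρ ^ (m - 1) := by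
    intro m; positivity
  rw [Real.norm_eq_abs, Real.norm_eq_abs, abs_of_nonneg (hnn _), abs_of_nonneg (hnn _)]
  push_cast
  have key : ((n : ℝ) - a) * ρ ≤ r * n := by
    have hfrac : (|a| + 1) * ρ / (r - ρ) ≤ (n : ℝ) := by
      have h1 : (0:ℝ) ≤ |a| + 1 := by positivity
      linarith
    rw [div_le_iff₀ (by linarith : (0:ℝ) < r - ρ)] at hfrac
    have := neg_abs_le a
    nlinarith
  have hLHS : |genChoose a (n+1)| * ((n:ℝ) + 1) * ρ ^ (n + 1 - 1)
      = |genChoose a n| * ρ ^ (n - 1) * (((n:ℝ) - a) * ρ) := by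
    rw [hpow]
    calc |genChoose a (n+1)| * ((n:ℝ) + 1) * (ρ ^ (n - 1) * ρ)
        = (|genChoose a (n+1)| * ((n:ℝ) + 1)) * ρ ^ (n - 1) * ρ := by ring
      _ = (|genChoose a n| * ((n:ℝ) - a)) * ρ ^ (n - 1) * ρ := by rw [hrec]
      _ = |genChoose a n| * ρ ^ (n - 1) * (((n:ℝ) - a) * ρ) := by ring
  calc |genChoose a (n+1)| * ((n:ℝ) + 1) * ρ ^ (n + 1 - 1)
      = |genChoose a n| * ρ ^ (n - 1) * (((n:ℝ) - a) * ρ) := hLHS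
    _ ≤ |genChoose a n| * ρ ^ (n - 1) * (r * n) := by
        apply mul_le_mul_of_nonneg_left key (by positivity)
    _ = r * (|genChoose a n| * (n:ℝ) * ρ ^ (n - 1)) := by ring

theorem hasSum_genChoose {a x : ℝ} (hx : |x| < 1) :
    HasSum (fun n : ℕ => genChoose a n * x ^ n) ((1 + x) ^ a) := by
  set ρ : ℝ := (|x| + 1) / 2 with hρdef
  have hxρ : |x| < ρ := by rw [hρdef]; linarith
  have hρ1 : ρ < 1 := by rw [hρdef]; linarith
  have hρ0 : 0 < ρ := by positivity
  set t : Set ℝ := Set.Ioo (-ρ) ρ with htdef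
  have ht_open : IsOpen t := isOpen_Ioo
  have ht_conn : IsPreconnected t := isPreconnected_Ioo
  set u : ℕ → ℝ := fun n => |genChoose a n| * n * ρ ^ (n - 1) with hudef
  have hu : Summable u := summable_genChoose_deriv_bound a hρ0 hρ1
  set g : ℕ → ℝ → ℝ := fun n z => genChoose a n * z ^ n with hgdef
  set g' : ℕ → ℝ → ℝ := fun n z => genChoose a n * ((n : ℝ) * z ^ (n - 1)) with hg'def
  have hg : ∀ n y, y ∈ t → HasDerivAt (g n) (g' n y) y := fun n y _ =>
    (hasDerivAt_pow n y).const_mul _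
  have hg' : ∀ n y, y ∈ t → ‖g' n y‖ ≤ u n := by
    intro n y hy
    have hyρ : |y| ≤ ρ := le_of_lt (abs_lt.2 ⟨hy.1, hy.2⟩)
    rw [Real.norm_eq_abs, hg'def, hudef]
    simp only [abs_mul, abs_pow, Nat.abs_cast]
    calc |genChoose a n| * ((n:ℝ) * |y| ^ (n-1))
        ≤ |genChoose a n| * ((n:ℝ) * ρ ^ (n-1)) := by
          apply mul_le_mul_of_nonneg_left _ (abs_nonneg _)
          apply mul_le_mul_of_nonneg_left _ (Nat.cast_nonneg n)
          exact pow_le_pow_left₀ (abs_nonneg y) hyρ _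
      _ = |genChoose a n| * (n:ℝ) * ρ ^ (n-1) := by ring
  have h0t : (0:ℝ) ∈ t := by constructor <;> simp [hρ0] <;> linarith
  have hxt : x ∈ t := abs_lt.1 hxρ
  have hg0 : Summable fun n => g n 0 := by
    apply summable_of_ne_finset_zero (s := ({0} : Finset ℕ))
    intro n hn
    simp only [Finset.mem_singleton] at hn
    simp [hgdef, zero_pow hn]
  have hsum : ∀ y ∈ t, Summable fun n => g n y := fun y hy =>
    summable_of_summable_hasDerivAt_of_isPreconnected hu ht_open ht_conn hg hg' h0t hg0 hy
  have hderiv : ∀ y ∈ t, HasDerivAt (fun z => ∑' n, g n z) (∑' n, g' n y) y := fun y hy =>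
    hasDerivAt_tsum_of_isPreconnected hu ht_open ht_conn hg hg' h0t hg0 hy
  -- the ODE : a * S y = (1 + y) * T y
  have hODE : ∀ y ∈ t, a * (∑' n, g n y) = (∑' n, g' n y) + y * (∑' n, g' n y) := by
    intro y hy
    have hTsum : Summable fun n => g' n y := hu.of_norm_bounded (fun n => hg' n y hy)
    have hT : HasSum (fun n => g' n y) (∑' n, g' n y) := hTsum.hasSum
    have h0 : g' 0 y = 0 := by simp [hg'def]
    have hT1 : HasSum (fun n => g' (n + 1) y) (∑' n, g' n y) := by
      apply (hasSum_nat_add_iff (f := fun n => g' n y) 1).mpr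
      simpa [h0] using hT
    have heq : (fun n : ℕ => g' (n + 1) y) = fun n : ℕ => (a - n) * (genChoose a n * y ^ n) := by
      funext n
      have : genChoose a (n+1) * ((n:ℝ) + 1) = genChoose a n * (a - n) := genChoose_succ a n
      simp only [hg'def, Nat.add_sub_cancel]
      push_cast
      linear_combination y ^ n * this
    rw [heq] at hT1
    have hterm : ∀ n : ℕ, y * (genChoose a n * ((n:ℝ) * y ^ (n-1)))
        = (n:ℝ) * (genChoose a n * y ^ n) := by
      intro n
      cases n with
      | zero => simp
      | succ m => rw [Nat.add_sub_cancel, pow_succ]; push_cast; ring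
    have hW : HasSum (fun n : ℕ => (n:ℝ) * (genChoose a n * y ^ n)) (y * ∑' n, g' n y) := by
      have h2 := hT.mul_left y
      have heq3 : (fun n : ℕ => y * g' n y)
          = fun n : ℕ => (n:ℝ) * (genChoose a n * y ^ n) := by
        funext n
        show y * (genChoose a n * ((n:ℝ) * y ^ (n-1))) = _
        exact hterm n
      rwa [heq3] at h2
    have hS : HasSum (fun n => genChoose a n * y ^ n) (∑' n, g n y) := by
      have h4 := (hsum y hy).hasSum
      simpa [hgdef] using h4
    have hcomb := hT1.add hW
    have heq2 : (fun n : ℕ => (a - (n:ℝ)) * (genChoose a n * y ^ n)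
        + (n:ℝ) * (genChoose a n * y ^ n)) = fun n : ℕ => a * (genChoose a n * y ^ n) :=
      funext fun n => by ring
    rw [heq2] at hcomb
    exact (hS.mul_left a).unique hcomb
  -- constancy of F z = S z * (1+z)^(-a)
  set F : ℝ → ℝ := fun z => (∑' n, g n z) * (1 + z) ^ (-a) with hFdef
  have hF : ∀ y ∈ t, HasDerivAt F 0 y := by
    intro y hy
    have hpos : 0 < 1 + y := by
      have h5 := hy.1
      linarith [hy.1]
    have hd1 := hderiv y hy
    have hd2 : HasDerivAt (fun z : ℝ => (1 + z) ^ (-a)) (1 * (-a) * (1 + y) ^ (-a - 1)) y := by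
      have hid : HasDerivAt (fun z : ℝ => 1 + z) 1 y := (hasDerivAt_id y).const_add 1
      exact hid.rpow_const (Or.inl (ne_of_gt hpos))
    have hmul := hd1.mul hd2
    have hval : (∑' n, g' n y) * (1 + y) ^ (-a)
        + (∑' n, g n y) * (1 * (-a) * (1 + y) ^ (-a - 1)) = 0 := by
      have hODEy := hODE y hy
      have hsplit : (1 + y) ^ (-a) = (1 + y) ^ (-a - 1) * (1 + y) := by
        rw [← Real.rpow_add_one (ne_of_gt hpos)]
        ring_nf
      rw [hsplit]
      have : (∑' n, g' n y) * ((1 + y) ^ (-a - 1) * (1 + y))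
          + (∑' n, g n y) * (1 * (-a) * (1 + y) ^ (-a - 1))
          = (1 + y) ^ (-a - 1) * (((∑' n, g' n y) + y * (∑' n, g' n y)) - a * (∑' n, g n y)) := by
        ring
      rw [this, ← hODEy]
      ring
    rw [hval] at hmul
    exact hmul
  have hdiff : DifferentiableOn ℝ F t := fun y hy =>
    ((hF y hy).differentiableAt).differentiableWithinAt
  have hfd : ∀ y ∈ t, fderivWithin ℝ F t y = 0 := by
    intro y hy
    rw [fderivWithin_of_isOpen ht_open hy, (hF y hy).hasFDerivAt.fderiv]
    ext z
    simp
  have hconst : F x = F 0 :=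
    (convex_Ioo (-ρ) ρ).is_const_of_fderivWithin_eq_zero hdiff hfd hxt h0t
  have hS0 : (∑' n, g n 0) = 1 := by
    rw [tsum_eq_single 0 (fun n hn => by simp [hgdef, zero_pow hn])]
    simp [hgdef, genChoose_zero]
  have hF0 : F 0 = 1 := by
    rw [hFdef]
    simp only [hS0]
    norm_num
  have h1x : 0 < 1 + x := by
    have := abs_lt.1 hx
    linarith [this.1]
  have hSx : (∑' n, g n x) = (1 + x) ^ a := by
    have h6 : F x = 1 := hconst.trans hF0
    rw [hFdef] at h6
    simp only at h6
    have h7 : (1 + x) ^ (-a) * (1 + x) ^ a = 1 := by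
      rw [← Real.rpow_add h1x]
      simp
    calc (∑' n, g n x) = (∑' n, g n x) * ((1 + x) ^ (-a) * (1 + x) ^ a) := by
          rw [h7]; ring
      _ = ((∑' n, g n x) * (1 + x) ^ (-a)) * (1 + x) ^ a := by ring
      _ = 1 * (1 + x) ^ a := by rw [h6]
      _ = (1 + x) ^ a := one_mul _
  have hfinal := (hsum x hxt).hasSum
  rw [hSx] at hfinal
  simpa [hgdef] using hfinal

lemma integrableOn_rpow_mul_exp_neg_mul_rpow' {p q b : ℝ} (hp : 0 < p) (hq : -1 < q)
    (hb : 0 < b) :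
    IntegrableOn (fun x : ℝ => x ^ q * Real.exp (-b * x ^ p)) (Set.Ioi 0) := by
  set s : ℝ := (q + 1) / p with hsdef
  have hs : 0 < s := div_pos (by linarith) hp
  have hf0 : IntegrableOn (fun y : ℝ => Real.exp (-y) * y ^ (s - 1)) (Set.Ioi 0) :=
    Real.GammaIntegral_convergent hs
  have hf1 : IntegrableOn (fun y : ℝ => Real.exp (-(b * y)) * (b * y) ^ (s - 1))
      (Set.Ioi 0) := by
    have := (integrableOn_Ioi_comp_mul_left_iff
      (fun y : ℝ => Real.exp (-y) * y ^ (s - 1)) 0 hb).2 (by rwa [mul_zero])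
    exact this
  have h2 := (integrableOn_Ioi_comp_rpow_iff'
    (fun y : ℝ => Real.exp (-(b * y)) * (b * y) ^ (s - 1)) (ne_of_gt hp)).2 hf1
  have h3 : IntegrableOn
      (fun x : ℝ => b ^ (1 - s) *
        (x ^ (p - 1) • (Real.exp (-(b * x ^ p)) * (b * x ^ p) ^ (s - 1)))) (Set.Ioi 0) :=
    h2.const_mul _
  refine h3.congr_fun (fun x hx => ?_) measurableSet_Ioi
  have hx0 : (0:ℝ) < x := hx
  have hxp : 0 < x ^ p := Real.rpow_pos_of_pos hx0 p
  have hps : p * s = q + 1 := by rw [hsdef]; field_simp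
  have e1 : b ^ (1 - s) * b ^ (s - 1) = 1 := by
    rw [← Real.rpow_add hb]; norm_num
  have e2 : x ^ (p - 1) * x ^ (p * (s - 1)) = x ^ q := by
    rw [← Real.rpow_add hx0]; congr 1; linear_combination hps
  dsimp only
  rw [smul_eq_mul, Real.mul_rpow hb.le hxp.le, ← Real.rpow_mul hx0.le]
  calc b ^ (1 - s) * (x ^ (p - 1) * (Real.exp (-(b * x ^ p)) * (b ^ (s-1) * x ^ (p*(s-1)))))
      = (b ^ (1-s) * b ^ (s-1)) * (x ^ (p-1) * x ^ (p*(s-1))) * Real.exp (-(b * x ^ p)) := by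
        ring
    _ = x ^ q * Real.exp (-b * x ^ p) := by rw [e1, e2, neg_mul]; ring

lemma eval_term_integral {α β : ℝ} (hα : 0 < α) (hβ : 0 < β) (r : ℕ) (i : ℕ) :
    ∫ x in Set.Ioi (0:ℝ), x ^ ((r:ℝ) + α - 1) * Real.exp (-(((i:ℝ) + 1) * β) * x ^ α)
      = (((i:ℝ) + 1) * β) ^ (-((r:ℝ)/α + 1)) * (1/α) * Real.Gamma ((r:ℝ)/α + 1) := by
  have hb : 0 < ((i:ℝ) + 1) * β := by positivity
  have hq : (-1:ℝ) < (r:ℝ) + α - 1 := by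
    have : (0:ℝ) ≤ (r:ℝ) := Nat.cast_nonneg r
    linarith
  have h := integral_rpow_mul_exp_neg_mul_rpow hα hq hb
  rw [h]
  have he : ((r:ℝ) + α - 1 + 1) / α = (r:ℝ)/α + 1 := by field_simp; ring
  rw [show -((r:ℝ) + α - 1 + 1) / α = -(((r:ℝ) + α - 1 + 1) / α) by ring, he]


/-- The `r`-th moment of the generalized transmuted Weibull distribution:
`∫₀^∞ x^r f(x) dx = Σ_{i=0}^∞ (−1)^i [(1+λ)C(θ−1,i) − 2λC(2θ−1,i)]
  θ Γ(r/α + 1) / (β^{r/α} (i+1)^{r/α+1})`. -/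
theorem gtw_moment (α β θ lam : ℝ) (r : ℕ)
    (hα : 0 < α) (hβ : 0 < β) (hθ : 0 < θ)
    (hlam : lam ∈ Set.Icc (-1 : ℝ) 1) :
    ∫ x in Set.Ioi (0 : ℝ),
        x ^ r *
          (θ * α * β * x ^ (α - 1) * Real.exp (-β * x ^ α) *
            (1 - Real.exp (-β * x ^ α)) ^ (θ - 1) *
            (1 + lam - 2 * lam * (1 - Real.exp (-β * x ^ α)) ^ θ)) =
      ∑' i : ℕ,
        (-1 : ℝ) ^ i *
          ((1 + lam) * genChoose (θ - 1) i - 2 * lam * genChoose (2 * θ - 1) i) *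
          θ * Real.Gamma ((r : ℝ) / α + 1) /
          (β ^ ((r : ℝ) / α) * ((i : ℝ) + 1) ^ ((r : ℝ) / α + 1)) := by
  have hδ1 : (-1:ℝ) < θ - 1 := by linarith
  have hδ2 : (-1:ℝ) < 2 * θ - 1 := by linarith
  set q : ℝ := (r : ℝ) + α - 1 with hqdef
  have hq : (-1:ℝ) < q := by
    have : (0:ℝ) ≤ (r:ℝ) := Nat.cast_nonneg r
    rw [hqdef]; linarith
  set C : ℕ → ℝ := fun i =>
    (-1:ℝ)^i * ((1 + lam) * genChoose (θ - 1) i - 2 * lam * genChoose (2 * θ - 1) i) with hCdef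
  set f : ℕ → ℝ → ℝ := fun i x =>
    (C i * (θ * α * β)) * (x ^ q * Real.exp (-(((i:ℝ) + 1) * β) * x ^ α)) with hfdef
  -- Step A : pointwise expansion
  have hptwise : ∀ x ∈ Set.Ioi (0:ℝ), HasSum (fun i => f i x)
      (x ^ r * (θ * α * β * x ^ (α - 1) * Real.exp (-β * x ^ α) *
        (1 - Real.exp (-β * x ^ α)) ^ (θ - 1) *
        (1 + lam - 2 * lam * (1 - Real.exp (-β * x ^ α)) ^ θ))) := by
    intro x hx
    have hx0 : (0:ℝ) < x := hx
    set u : ℝ := Real.exp (-β * x ^ α) with hudef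
    have hu0 : 0 < u := Real.exp_pos _
    have hu1 : u < 1 := by
      rw [hudef]
      have hxα : 0 < x ^ α := Real.rpow_pos_of_pos hx0 α
      have : -β * x ^ α < 0 := by nlinarith
      calc Real.exp (-β * x ^ α) < Real.exp 0 := Real.exp_lt_exp.2 this
        _ = 1 := Real.exp_zero
    have h1u : (0:ℝ) < 1 - u := by linarith
    have habs : |(-u)| < 1 := by rw [abs_neg, abs_of_pos hu0]; exact hu1
    have h1 := hasSum_genChoose (a := θ - 1) habs
    have h2 := hasSum_genChoose (a := 2 * θ - 1) habs
    rw [show (1:ℝ) + -u = 1 - u by ring] at h1 h2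
    have h3 := (h1.mul_left (1 + lam)).sub (h2.mul_left (2 * lam))
    set M : ℝ := x ^ ((r:ℝ)) * (θ * α * β) * x ^ (α - 1) * u with hMdef
    have h4 := h3.mul_left M
    have hxq : x ^ ((r:ℝ)) * x ^ (α - 1) = x ^ q := by
      rw [← Real.rpow_add hx0]; congr 1; rw [hqdef]; ring
    have hterm : (fun i : ℕ => M * ((1 + lam) * (genChoose (θ - 1) i * (-u) ^ i)
        - 2 * lam * (genChoose (2 * θ - 1) i * (-u) ^ i))) = fun i => f i x := by
      funext i
      have hex : u * u ^ i = Real.exp (-(((i:ℝ) + 1) * β) * x ^ α) := by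
        rw [hudef, ← Real.exp_nat_mul, ← Real.exp_add]
        congr 1
        push_cast
        ring
      have hnp : (-u) ^ i = (-1:ℝ) ^ i * u ^ i := by rw [neg_pow]
      calc M * ((1 + lam) * (genChoose (θ - 1) i * (-u) ^ i)
            - 2 * lam * (genChoose (2 * θ - 1) i * (-u) ^ i))
          = (C i * (θ * α * β)) * ((x ^ ((r:ℝ)) * x ^ (α - 1)) * (u * u ^ i)) := by
            rw [hMdef, hnp, hCdef]; ring
        _ = (C i * (θ * α * β)) * (x ^ q * Real.exp (-(((i:ℝ) + 1) * β) * x ^ α)) := by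
            rw [hxq, hex]
        _ = f i x := by rw [hfdef]
    have hval : M * ((1 + lam) * (1 - u) ^ (θ - 1) - 2 * lam * (1 - u) ^ (2 * θ - 1))
        = x ^ r * (θ * α * β * x ^ (α - 1) * u *
          (1 - u) ^ (θ - 1) * (1 + lam - 2 * lam * (1 - u) ^ θ)) := by
      have hsplit : (1 - u) ^ (2 * θ - 1) = (1 - u) ^ (θ - 1) * (1 - u) ^ θ := by
        rw [← Real.rpow_add h1u]; congr 1; ring
      have hxr : x ^ ((r:ℝ)) = x ^ r := Real.rpow_natCast x r
      rw [hMdef, hsplit, hxr]; ring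
    rw [hterm, hval] at h4
    exact h4
  -- Step B : integrability and value of each term
  have hint : ∀ i : ℕ, IntegrableOn (f i) (Set.Ioi 0) := by
    intro i
    have hb : 0 < ((i:ℝ) + 1) * β := by positivity
    exact (integrableOn_rpow_mul_exp_neg_mul_rpow' hα hq hb).const_mul _
  have hIval : ∀ i : ℕ, ∫ x in Set.Ioi (0:ℝ), f i x
      = (-1:ℝ)^i * ((1 + lam) * genChoose (θ - 1) i - 2 * lam * genChoose (2 * θ - 1) i)
        * θ * Real.Gamma ((r:ℝ)/α + 1)
        / (β ^ ((r:ℝ)/α) * ((i:ℝ) + 1) ^ ((r:ℝ)/α + 1)) := by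
    intro i
    have hi1 : (0:ℝ) < (i:ℝ) + 1 := by positivity
    rw [hfdef]
    simp only
    rw [MeasureTheory.integral_const_mul, hqdef, eval_term_integral hα hβ r i]
    have hsplitb : (((i:ℝ) + 1) * β) ^ (-((r:ℝ)/α + 1))
        = (((i:ℝ) + 1) ^ ((r:ℝ)/α + 1))⁻¹ * (β ^ ((r:ℝ)/α) * β)⁻¹ := by
      rw [Real.mul_rpow hi1.le hβ.le, Real.rpow_neg hi1.le, Real.rpow_neg hβ.le,
        ← Real.rpow_add_one (ne_of_gt hβ)]
    rw [hsplitb, hCdef]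
    have hA : ((i:ℝ) + 1) ^ ((r:ℝ)/α + 1) ≠ 0 := by positivity
    have hB : β ^ ((r:ℝ)/α) ≠ 0 := by positivity
    field_simp
  -- Step C : measurability
  have hmeas : ∀ i : ℕ, AEStronglyMeasurable (f i) (volume.restrict (Set.Ioi 0)) :=
    fun i => ((hint i).mono_set (subset_refl _)).aestronglyMeasurable
  -- Step D : finiteness of the sum of lintegrals of norms
  set Γ : ℝ := Real.Gamma ((r:ℝ)/α + 1) with hΓdef
  have hΓpos : 0 < Γ := Real.Gamma_pos_of_pos (by positivity)
  set G : ℕ → ℝ := fun i => (((i:ℝ) + 1) * β) ^ (-((r:ℝ)/α + 1)) * (1/α) * Γ with hGdef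
  have hGpos : ∀ i, 0 < G i := by
    intro i
    have : (0:ℝ) < ((i:ℝ) + 1) * β := by positivity
    rw [hGdef]
    have := Real.rpow_pos_of_pos this (-((r:ℝ)/α + 1))
    positivity
  have hnormint : ∀ i : ℕ, ∫⁻ x in Set.Ioi 0, ‖f i x‖₊
      = ENNReal.ofReal (|C i * (θ * α * β)| * G i) := by
    intro i
    refine Eq.trans (MeasureTheory.ofReal_integral_norm_eq_lintegral_enorm (hint i)).symm ?_
    congr 1
    calc ∫ x in Set.Ioi (0:ℝ), ‖f i x‖
        = ∫ x in Set.Ioi (0:ℝ), |C i * (θ * α * β)|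
            * (x ^ q * Real.exp (-(((i:ℝ) + 1) * β) * x ^ α)) := by
          refine setIntegral_congr_fun measurableSet_Ioi (fun x hx => ?_)
          have hx0 : (0:ℝ) < x := hx
          rw [hfdef]
          simp only
          have hxqn : (0:ℝ) ≤ x ^ q := Real.rpow_nonneg hx0.le q
          rw [Real.norm_eq_abs, abs_mul, abs_of_nonneg
            (by positivity : (0:ℝ) ≤ x ^ q * Real.exp (-(((i:ℝ) + 1) * β) * x ^ α))]
      _ = |C i * (θ * α * β)| * G i := by
          rw [MeasureTheory.integral_const_mul, hqdef, eval_term_integral hα hβ r i, hGdef]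
  have hsummv : Summable (fun i => |C i * (θ * α * β)| * G i) := by
    set K0 : ℝ := (θ * α * β) * (β ^ (-((r:ℝ)/α + 1)) * (1/α) * Γ) with hK0def
    have hK0 : 0 < K0 := by
      have := Real.rpow_pos_of_pos hβ (-((r:ℝ)/α + 1))
      rw [hK0def]; positivity
    have hmaj : Summable (fun i =>
        (K0 * (1 + |lam|)) * (|genChoose (θ - 1) i| / ((i:ℝ) + 1))
        + (K0 * (2 * |lam|)) * (|genChoose (2 * θ - 1) i| / ((i:ℝ) + 1))) :=
      ((summable_abs_genChoose_div (θ - 1) hδ1).mul_left _).add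
        ((summable_abs_genChoose_div (2 * θ - 1) hδ2).mul_left _)
    refine Summable.of_nonneg_of_le (fun i => by positivity) (fun i => ?_) hmaj
    have hi1 : (0:ℝ) < (i:ℝ) + 1 := by positivity
    have hGle : G i ≤ (β ^ (-((r:ℝ)/α + 1)) * (1/α) * Γ) * (1 / ((i:ℝ) + 1)) := by
      rw [hGdef]
      simp only
      rw [Real.mul_rpow hi1.le hβ.le]
      have h6 : ((i:ℝ) + 1) ^ (-((r:ℝ)/α + 1)) ≤ ((i:ℝ) + 1) ^ (-(1:ℝ)) := by
        apply Real.rpow_le_rpow_of_exponent_le (by linarith)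
        have : (0:ℝ) ≤ (r:ℝ)/α := by positivity
        linarith
      rw [Real.rpow_neg_one] at h6
      have hβp : (0:ℝ) < β ^ (-((r:ℝ)/α + 1)) := Real.rpow_pos_of_pos hβ _
      calc ((i:ℝ) + 1) ^ (-((r:ℝ)/α + 1)) * β ^ (-((r:ℝ)/α + 1)) * (1/α) * Γ
          ≤ ((i:ℝ) + 1)⁻¹ * β ^ (-((r:ℝ)/α + 1)) * (1/α) * Γ := by
            apply mul_le_mul_of_nonneg_right _ hΓpos.le
            apply mul_le_mul_of_nonneg_right _ (by positivity)
            exact mul_le_mul_of_nonneg_right h6 hβp.le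
        _ = (β ^ (-((r:ℝ)/α + 1)) * (1/α) * Γ) * (1 / ((i:ℝ) + 1)) := by
            rw [one_div]; ring
    have hCle : |C i * (θ * α * β)|
        ≤ (θ * α * β) * ((1 + |lam|) * |genChoose (θ - 1) i|
          + 2 * |lam| * |genChoose (2 * θ - 1) i|) := by
      rw [abs_mul, abs_of_pos (by positivity : (0:ℝ) < θ * α * β), mul_comm]
      apply mul_le_mul_of_nonneg_left _ (by positivity)
      rw [hCdef]
      simp only
      rw [abs_mul, abs_pow, abs_neg, abs_one, one_pow, one_mul]
      calc |(1 + lam) * genChoose (θ - 1) i - 2 * lam * genChoose (2 * θ - 1) i|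
          ≤ |(1 + lam) * genChoose (θ - 1) i| + |2 * lam * genChoose (2 * θ - 1) i| :=
            abs_sub _ _
        _ ≤ (1 + |lam|) * |genChoose (θ - 1) i| + 2 * |lam| * |genChoose (2 * θ - 1) i| := by
            rw [abs_mul, abs_mul, abs_mul, abs_two]
            apply add_le_add
            · apply mul_le_mul_of_nonneg_right _ (abs_nonneg _)
              calc |1 + lam| ≤ |(1:ℝ)| + |lam| := abs_add_le _ _
                _ = 1 + |lam| := by rw [abs_one]
            · exact le_rfl
    calc |C i * (θ * α * β)| * G i
        ≤ ((θ * α * β) * ((1 + |lam|) * |genChoose (θ - 1) i|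
            + 2 * |lam| * |genChoose (2 * θ - 1) i|))
          * ((β ^ (-((r:ℝ)/α + 1)) * (1/α) * Γ) * (1 / ((i:ℝ) + 1))) := by
          apply mul_le_mul hCle hGle (hGpos i).le (by positivity)
      _ = (K0 * (1 + |lam|)) * (|genChoose (θ - 1) i| / ((i:ℝ) + 1))
          + (K0 * (2 * |lam|)) * (|genChoose (2 * θ - 1) i| / ((i:ℝ) + 1)) := by
          rw [hK0def]; field_simp
  have hne : (∑' i, ∫⁻ x in Set.Ioi 0, ‖f i x‖₊) ≠ ⊤ := by
    rw [tsum_congr hnormint,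
      ← ENNReal.ofReal_tsum_of_nonneg (fun i => by positivity) hsummv]
    exact ENNReal.ofReal_ne_top
  -- conclude
  calc ∫ x in Set.Ioi (0 : ℝ),
        x ^ r *
          (θ * α * β * x ^ (α - 1) * Real.exp (-β * x ^ α) *
            (1 - Real.exp (-β * x ^ α)) ^ (θ - 1) *
            (1 + lam - 2 * lam * (1 - Real.exp (-β * x ^ α)) ^ θ))
      = ∫ x in Set.Ioi (0:ℝ), ∑' i, f i x := by
        refine setIntegral_congr_fun measurableSet_Ioi (fun x hx => ?_)
        exact ((hptwise x hx).tsum_eq).symm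
    _ = ∑' i, ∫ x in Set.Ioi (0:ℝ), f i x := MeasureTheory.integral_tsum hmeas hne
    _ = ∑' i : ℕ,
        (-1 : ℝ) ^ i *
          ((1 + lam) * genChoose (θ - 1) i - 2 * lam * genChoose (2 * θ - 1) i) *
          θ * Real.Gamma ((r : ℝ) / α + 1) /
          (β ^ ((r : ℝ) / α) * ((i : ℝ) + 1) ^ ((r : ℝ) / α + 1)) := tsum_congr hIval
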